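/- Let α be a reduced word of ω with tower decomposition a_1 … a_s. If for some index i the conditions in(a_i) ≤ in(a_{i+1}) and fin(a_{i+1}) < fin(a_i) hold, where in and fin denote the first and last letters of a tower word, then for any factorization a_{i+1} = b_1 b_2 into tower words (b_2 possibly empty), the word β = a_1 … a_{i−1} b̃_1 a_i b_2 a_{i+2} … a_s, where b̃_1 is obtained from b_1 by increasing every letter by 1, represents the same permutation ω as α. -/

import Mathlib

/-- The adjacent transposition `sᵢ = (i, i+1)` as a permutation of `ℕ`. -/
def sGen (i : ℕ) : Equiv.Perm ℕ := Equiv.swap i (i + 1)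

/-- The permutation represented by a word. -/
def toPerm (w : List ℕ) : Equiv.Perm ℕ := (w.map sGen).prod

/-- A word is reduced (of minimal length among words representing the same permutation). -/
def IsReducedWord (w : List ℕ) : Prop := ∀ v : List ℕ, toPerm v = toPerm w → w.length ≤ v.length

/-- `w` is a reduced word for the permutation `ω`. -/
def IsReducedWordOf (w : List ℕ) (ω : Equiv.Perm ℕ) : Prop :=
  toPerm w = ω ∧ ∀ v : List ℕ, toPerm v = ω → w.length ≤ v.length

/-- The relation `<₁`: `β` is obtained from `α` by swapping two adjacent letters
`x, y` with `y ≥ x + 2` (the smaller letter moves right). -/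
def Rel1 (α β : List ℕ) : Prop :=
  ∃ (p q : List ℕ) (x y : ℕ), x + 2 ≤ y ∧
    α = p ++ x :: y :: q ∧ β = p ++ y :: x :: q

/-- Lexicographic order (non-strict) on words. -/
def LexLe (α β : List ℕ) : Prop := α = β ∨ List.Lex (· < ·) α β

/-- A tower word: a nonempty increasing run of consecutive integers. -/
def IsTowerWord (a : List ℕ) : Prop := a ≠ [] ∧ a.Chain' (fun x y => y = x + 1)

/-- First letter of a tower word. -/
def inn (a : List ℕ) : ℕ := a.headI

/-- Last letter of a tower word. -/
def fin' (a : List ℕ) : ℕ := a.getLastD 0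

/-- `L` is the tower decomposition of `w`: a factorization into maximal tower words. -/
def IsTowerDecomp (w : List ℕ) (L : List (List ℕ)) : Prop :=
  L.flatten = w ∧ (∀ a ∈ L, IsTowerWord a) ∧
    L.Chain' (fun a b => inn b ≠ fin' a + 1)

/-- The relation `<₂`: a directed long-braid move of a tower word past its left neighbour. -/
def Rel2 (α β : List ℕ) : Prop :=
  ∃ (A B : List (List ℕ)) (a b b1 b2 : List ℕ),
    IsTowerDecomp α (A ++ a :: b :: B) ∧
    inn a ≤ inn b ∧ inn b < fin' b ∧ fin' b < fin' a ∧
    IsTowerWord b1 ∧ (b2 = [] ∨ IsTowerWord b2) ∧ b1 ++ b2 = b ∧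
    β = A.flatten ++ (b1.map (· + 1)) ++ a ++ b2 ++ B.flatten

/-- The directed-braid order: reflexive-transitive closure of `<₁ ∪ <₂`. -/
def DBraid : List ℕ → List ℕ → Prop :=
  Relation.ReflTransGen (fun α β => Rel1 α β ∨ Rel2 α β)

/-- The natural word of `ω`: the reduced word whose tower decomposition has
strictly decreasing initial letters. -/
def IsNaturalWordOf (η : List ℕ) (ω : Equiv.Perm ℕ) : Prop :=
  IsReducedWordOf η ω ∧ ∃ L, IsTowerDecomp η L ∧ L.Chain' (fun a b => inn b < inn a)

/-- A natural basic word of `ω`: a reduced word whose tower decomposition satisfies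
`fin(aᵢ) > in(aᵢ₊₁)` for all `i`. -/
def IsNaturalBasicOf (β : List ℕ) (ω : Equiv.Perm ℕ) : Prop :=
  IsReducedWordOf β ω ∧ ∃ L, IsTowerDecomp β L ∧ L.Chain' (fun a b => inn b < fin' a)

/-- One step of the track of a letter `b` through a tower word `a`. -/
def trackStep (a : List ℕ) (b : ℕ) : Option ℕ :=
  if inn a < b ∧ b ≤ fin' a then some (b - 1)
  else if b + 2 ≤ inn a ∨ fin' a + 2 ≤ b then some b
  else none

/-- The track sequence of `b` through a list of tower words. -/
def trackSeq : ℕ → List (List ℕ) → List ℕ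
  | b, [] => [b]
  | b, a :: rest =>
    match trackStep a b with
    | none => [b]
    | some b' => b :: trackSeq b' rest

/-- The tower decomposition of a word, as a function. -/
def towerDecomp : List ℕ → List (List ℕ)
  | [] => []
  | x :: xs =>
    match towerDecomp xs with
    | [] => [[x]]
    | t :: ts => if t.headI = x + 1 then (x :: t) :: ts else [x] :: t :: ts


lemma toPerm_append (u v : List ℕ) : toPerm (u ++ v) = toPerm u * toPerm v := by
  simp [toPerm]

lemma toPerm_range'_apply (n p x : ℕ) :
    toPerm (List.range' p n) x =
      if p ≤ x ∧ x < p + n then x + 1 else if x = p + n then p else x := by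
  induction n generalizing p with
  | zero => simp [toPerm]; split_ifs <;> omega
  | succ n ih =>
    rw [List.range'_succ]
    simp only [toPerm, List.map_cons, List.prod_cons, Equiv.Perm.mul_apply]
    show sGen p (toPerm (List.range' (p+1) n) x) = _
    rw [ih]
    simp only [sGen, Equiv.swap_apply_def]
    split_ifs <;> omega

lemma swap_comm_tower (p n c : ℕ) (h1 : p ≤ c) (h2 : c + 2 ≤ p + n) :
    sGen (c+1) * toPerm (List.range' p n) = toPerm (List.range' p n) * sGen c := by
  ext x
  simp only [Equiv.Perm.mul_apply, sGen, Equiv.swap_apply_def, toPerm_range'_apply]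
  split_ifs <;> omega

lemma shift_comm (p n : ℕ) (w : List ℕ) (hw : ∀ c ∈ w, p ≤ c ∧ c + 2 ≤ p + n) :
    toPerm (w.map (· + 1)) * toPerm (List.range' p n) =
      toPerm (List.range' p n) * toPerm w := by
  induction w with
  | nil => simp [toPerm]
  | cons c w ih =>
    have hc := hw c (List.mem_cons_self)
    simp only [List.map_cons, toPerm, List.prod_cons] at *
    rw [mul_assoc, ih (fun d hd => hw d (List.mem_cons_of_mem _ hd)), ← mul_assoc]
    have h := swap_comm_tower p n c hc.1 hc.2
    simp only [toPerm] at h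
    rw [h, mul_assoc]

lemma chain_eq_range' (a : List ℕ) (h : a.Chain' (fun x y => y = x + 1)) :
    a = List.range' a.headI a.length := by
  induction a with
  | nil => rfl
  | cons x xs ih =>
    rcases xs with _ | ⟨y, ys⟩
    · rfl
    · obtain ⟨hxy, hch⟩ := List.isChain_cons_cons.mp h
      have hx := ih hch
      simp only [List.headI] at hx ⊢
      rw [List.length_cons, List.range'_succ]
      subst hxy
      exact congrArg (x :: ·) hx

lemma tower_eq_range' (a : List ℕ) (h : IsTowerWord a) :
    a = List.range' (inn a) a.length := chain_eq_range' a h.2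

lemma getLastD_range' (n p d : ℕ) (h : 1 ≤ n) :
    (List.range' p n).getLastD d = p + n - 1 := by
  induction n generalizing p d with
  | zero => omega
  | succ n ih =>
    rw [List.range'_succ, List.getLastD_cons]
    rcases Nat.eq_zero_or_pos n with h0 | h0
    · subst h0; simp
    · rw [ih (p+1) p h0]; omega

lemma fin'_range' (p n : ℕ) (h : 1 ≤ n) : fin' (List.range' p n) = p + n - 1 :=
  getLastD_range' n p 0 h

/-- moving a (shifted) initial segment of a tower word past its left
neighbour preserves the represented permutation. -/
theorem rel2_move_preserves_perm (ω : Equiv.Perm ℕ) (α : List ℕ)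
    (hα : IsReducedWordOf α ω)
    (A B : List (List ℕ)) (a b b1 b2 : List ℕ)
    (hd : IsTowerDecomp α (A ++ a :: b :: B))
    (h1 : inn a ≤ inn b) (h2 : fin' b < fin' a)
    (hb1 : IsTowerWord b1) (hb2 : b2 = [] ∨ IsTowerWord b2)
    (hfac : b1 ++ b2 = b) :
    toPerm (A.flatten ++ (b1.map (· + 1)) ++ a ++ b2 ++ B.flatten) = ω := by
  obtain ⟨hflat, htw, -⟩ := hd
  have ha : IsTowerWord a := htw a (by simp)
  have hb : IsTowerWord b := htw b (by simp)
  have haR : a = List.range' (inn a) a.length := tower_eq_range' a ha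
  have hbR : b = List.range' (inn b) b.length := tower_eq_range' b hb
  have han : 1 ≤ a.length := List.length_pos_iff.mpr ha.1
  have hbn : 1 ≤ b.length := List.length_pos_iff.mpr hb.1
  have hfa : fin' a = inn a + a.length - 1 := by
    have := fin'_range' (inn a) a.length han; rwa [← haR] at this
  have hfb : fin' b = inn b + b.length - 1 := by
    have := fin'_range' (inn b) b.length hbn; rwa [← hbR] at this
  have hinn1 : inn b1 = inn b := by
    obtain ⟨c, cs, rfl⟩ := List.exists_cons_of_ne_nil hb1.1
    rw [← hfac]; rfl
  have hb1R : b1 = List.range' (inn b) b1.length := by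
    have := tower_eq_range' b1 hb1; rwa [hinn1] at this
  have hlen : b1.length ≤ b.length := by
    rw [← hfac, List.length_append]; omega
  have hbound : ∀ c ∈ b1, inn a ≤ c ∧ c + 2 ≤ inn a + a.length := by
    intro c hc
    rw [hb1R, List.mem_range'_1] at hc
    omega
  have key : toPerm (b1.map (· + 1)) * toPerm a = toPerm a * toPerm b1 := by
    rw [haR]; exact shift_comm (inn a) a.length b1 hbound
  have hαval : toPerm A.flatten * (toPerm a * (toPerm b * toPerm B.flatten)) = ω := by
    rw [← hα.1, ← hflat]
    simp [toPerm_append]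
  calc toPerm (A.flatten ++ (b1.map (· + 1)) ++ a ++ b2 ++ B.flatten)
      = toPerm A.flatten *
        ((toPerm (b1.map (· + 1)) * toPerm a) * (toPerm b2 * toPerm B.flatten)) := by
        simp [toPerm_append, mul_assoc]
    _ = toPerm A.flatten * (toPerm a * ((toPerm b1 * toPerm b2) * toPerm B.flatten)) := by
        rw [key]; group
    _ = toPerm A.flatten * (toPerm a * (toPerm b * toPerm B.flatten)) := by
        rw [← toPerm_append, hfac]
    _ = ω := hαval
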